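/- arXiv:math/0211281 — 2 statements merged into one kernel-verified Lean document; each statement's English description precedes it below -/
import Mathlib

section
/- A point (b,c,d) ∈ 𝕜³ lies in the affine plane {(b,c,d) : u²b + uc + d = -u³} if and only if u is a root of z³ + bz² + cz + d; moreover this plane equals the osculating plane of the curve κ(u) = (-3u, 3u², -u³) at κ(u). -/
/-- `(b,c,d)` lies in the plane `u²b + uc + d = -u³` iff `u` is a root of `z³+bz²+cz+d`;
moreover this plane is the osculating plane of `κ(u) = (-3u, 3u², -u³)` at `κ(u)`. -/
theorem stmt_9 (K : Type*) [Field K] [CharZero K] (u : K) :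
    (∀ b c d : K, u ^ 2 * b + u * c + d = -u ^ 3 ↔
      u ^ 3 + b * u ^ 2 + c * u + d = 0) ∧
    {p : K × K × K | u ^ 2 * p.1 + u * p.2.1 + p.2.2 = -u ^ 3}
      = {p : K × K × K | ∃ t s : K,
          p = ((-3 * u, 3 * u ^ 2, -u ^ 3) : K × K × K)
            + t • ((-3, 6 * u, -3 * u ^ 2) : K × K × K)
            + s • ((0, 6, -6 * u) : K × K × K)} := by
  constructor
  · intro b c d
    constructor <;> intro h <;> linear_combination h
  · ext ⟨a, b, c⟩
    simp only [Set.mem_setOf_eq, Prod.smul_mk, smul_eq_mul, Prod.mk_add_mk, Prod.mk.injEq]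
    constructor
    · intro h
      refine ⟨-(a + 3 * u) / 3, (b + 2 * u * a + 3 * u ^ 2) / 6, by ring, by ring, ?_⟩
      field_simp
      linear_combination h
    · rintro ⟨t, s, h1, h2, h3⟩
      subst h1 h2 h3
      ring
end

section
/- Let P(z) be a monic polynomial of degree d over ℂ with distinct roots u₁,…,u_r of multiplicities μ₁,…,μ_r, and let P_t(z) = ∏ᵢ (z - uᵢ - aᵢ(t))^{μᵢ} be a differentiable deformation with aᵢ(0) = 0. Then every polynomial on the tangent line P + τ·(dP_t/dt)|_{t=0} is divisible by ∏ᵢ (z - uᵢ)^{μᵢ - 1}. -/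
open Polynomial Finset

/-- Coefficientwise derivative of a polynomial-valued function. -/
def HasDerivPolyAt (f : ℂ → Polynomial ℂ) (p : Polynomial ℂ) (t : ℂ) : Prop :=
  ∀ k, HasDerivAt (fun s => (f s).coeff k) (p.coeff k) t

lemma hasDerivPolyAt_const (c : Polynomial ℂ) (t : ℂ) : HasDerivPolyAt (fun _ => c) 0 t :=
  fun k => by simpa using hasDerivAt_const t (c.coeff k)

lemma HasDerivPolyAt.mul {f g : ℂ → Polynomial ℂ} {p q : Polynomial ℂ} {t : ℂ}
    (hf : HasDerivPolyAt f p t) (hg : HasDerivPolyAt g q t) :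
    HasDerivPolyAt (fun s => f s * g s) (p * g t + f t * q) t := by
  intro k
  simp only [coeff_mul, coeff_add]
  rw [← Finset.sum_add_distrib]
  exact HasDerivAt.fun_sum fun (x : ℕ × ℕ) _ => (hf x.1).mul (hg x.2)

lemma HasDerivPolyAt.pow {f : ℂ → Polynomial ℂ} {p : Polynomial ℂ} {t : ℂ}
    (hf : HasDerivPolyAt f p t) (n : ℕ) :
    HasDerivPolyAt (fun s => f s ^ n) (C (n : ℂ) * ((f t) ^ (n - 1) * p)) t := by
  induction n with
  | zero => simpa using hasDerivPolyAt_const 1 t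
  | succ n ih =>
    have h := ih.mul hf
    have e : C ((n : ℕ) : ℂ) * (f t ^ (n - 1) * p) * f t + f t ^ n * p
        = C (((n + 1 : ℕ)) : ℂ) * (f t ^ (n + 1 - 1) * p) := by
      cases n with
      | zero => simp
      | succ m =>
        simp only [Nat.add_sub_cancel, pow_succ, Nat.cast_add, Nat.cast_one, C_add, C_1]
        ring
    simp only [pow_succ]
    rw [← e]
    exact h

lemma hasDerivPolyAt_prod {ι : Type*} [DecidableEq ι] (s : Finset ι)
    (f : ι → ℂ → Polynomial ℂ) (p : ι → Polynomial ℂ) (t : ℂ)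
    (h : ∀ i ∈ s, HasDerivPolyAt (f i) (p i) t) :
    HasDerivPolyAt (fun x => ∏ i ∈ s, f i x)
      (∑ i ∈ s, p i * ∏ j ∈ s.erase i, f j t) t := by
  induction s using Finset.induction_on with
  | empty => simpa using hasDerivPolyAt_const 1 t
  | @insert a s ha ih =>
    have h1 := h a (mem_insert_self a s)
    have h2 := ih (fun i hi => h i (mem_insert_of_mem hi))
    have hmul := h1.mul h2
    have e : (∑ i ∈ insert a s, p i * ∏ j ∈ (insert a s).erase i, f j t)
        = p a * (∏ i ∈ s, f i t) + (f a t) * ∑ i ∈ s, p i * ∏ j ∈ s.erase i, f j t := by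
      rw [Finset.sum_insert ha, Finset.erase_insert ha, Finset.mul_sum]
      congr 1
      refine Finset.sum_congr rfl fun i hi => ?_
      have hne : a ≠ i := (ne_of_mem_of_not_mem hi ha).symm
      rw [Finset.erase_insert_of_ne hne,
        Finset.prod_insert (fun hh => ha (Finset.mem_of_mem_erase hh))]
      ring
    simp only [Finset.prod_insert ha]
    rw [e]
    exact hmul

lemma lin_hasDerivPolyAt (c : ℂ) (a : ℂ → ℂ) (h : DifferentiableAt ℂ a 0) :
    HasDerivPolyAt (fun t => X - C (c + a t)) (C (-(deriv a 0))) 0 := by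
  intro k
  match k with
  | 0 =>
    simp only [coeff_sub, coeff_X_zero, coeff_C_zero, zero_sub]
    exact (h.hasDerivAt.const_add c).neg
  | 1 =>
    simp only [coeff_sub, coeff_X_one, coeff_C]
    simpa using hasDerivAt_const (0 : ℂ) (1 : ℂ)
  | (k + 2) =>
    simp only [coeff_sub, coeff_C]
    norm_num [coeff_X]
    exact hasDerivAt_const _ _

/-- Divisibility is tangency (direct direction): for a differentiable deformation
`P_t(z) = ∏ᵢ (z - uᵢ - aᵢ(t))^{μᵢ}` of `P(z) = ∏ᵢ (z - uᵢ)^{μᵢ}`, every polynomial on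
the tangent line `P + τ·(dP_t/dt)|₀` is divisible by `∏ᵢ (z - uᵢ)^{μᵢ-1}`. -/
theorem stmt_16 (r : ℕ) (u : Fin r → ℂ) (hu : Function.Injective u)
    (μ : Fin r → ℕ) (hμ : ∀ i, 1 ≤ μ i)
    (a : Fin r → ℂ → ℂ) (ha0 : ∀ i, a i 0 = 0)
    (hdiff : ∀ i, DifferentiableAt ℂ (a i) 0)
    (P : ℂ → Polynomial ℂ)
    (hP : ∀ t, P t = ∏ i, (X - C (u i + a i t)) ^ μ i)
    (τ : ℂ) :
    (∏ i, (X - C (u i)) ^ (μ i - 1)) ∣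
      (P 0 + τ • ∑ k ∈ Finset.range ((∑ i, μ i) + 1),
        C (deriv (fun t => (P t).coeff k) 0) * X ^ k) := by
  classical
  set q : Fin r → Polynomial ℂ :=
    fun i => C ((μ i : ℕ) : ℂ) * ((X - C (u i)) ^ (μ i - 1) * C (-(deriv (a i) 0))) with hq
  set D : Polynomial ℂ :=
    ∑ i, q i * ∏ j ∈ Finset.univ.erase i, (X - C (u j)) ^ (μ j) with hD
  -- each factor has coefficientwise derivative
  have hfac : ∀ i : Fin r, HasDerivPolyAt (fun t => (X - C (u i + a i t)) ^ μ i) (q i) 0 := by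
    intro i
    have h0 := (lin_hasDerivPolyAt (u i) (a i) (hdiff i)).pow (μ i)
    simpa [ha0 i, hq] using h0
  have hProd := hasDerivPolyAt_prod Finset.univ
    (fun i t => (X - C (u i + a i t)) ^ μ i) q 0 (fun i _ => hfac i)
  have hProdD : HasDerivPolyAt (fun t => P t) D 0 := by
    have hfun : (fun t => P t) = fun t => ∏ i, (X - C (u i + a i t)) ^ μ i := funext hP
    rw [hfun]
    have : (∑ i, q i * ∏ j ∈ Finset.univ.erase i, (X - C (u j + a j 0)) ^ μ j) = D := by
      simp [ha0, hD]
    rw [← this]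
    exact hProd
  have key : ∀ k, deriv (fun t => (P t).coeff k) 0 = D.coeff k := fun k => (hProdD k).deriv
  -- degree bound
  have hdeg : D.natDegree < (∑ i, μ i) + 1 := by
    have : D.natDegree ≤ ∑ i, μ i := by
      rw [hD]
      refine Polynomial.natDegree_sum_le_of_forall_le _ _ fun i _ => ?_
      have h1 : (q i).natDegree ≤ μ i - 1 := by
        rw [hq]
        refine le_trans natDegree_mul_le ?_
        rw [natDegree_C, zero_add]
        refine le_trans natDegree_mul_le ?_
        rw [natDegree_C, add_zero, natDegree_pow, natDegree_X_sub_C, mul_one]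
      have h2 : (∏ j ∈ Finset.univ.erase i, (X - C (u j)) ^ (μ j)).natDegree
          ≤ ∑ j ∈ Finset.univ.erase i, μ j := by
        refine le_trans (Polynomial.natDegree_prod_le _ _) ?_
        refine Finset.sum_le_sum fun j _ => ?_
        simp [natDegree_pow, natDegree_X_sub_C]
      have h3 := Finset.add_sum_erase Finset.univ μ (Finset.mem_univ i)
      calc (q i * ∏ j ∈ Finset.univ.erase i, (X - C (u j)) ^ (μ j)).natDegree
          ≤ (q i).natDegree + (∏ j ∈ Finset.univ.erase i, (X - C (u j)) ^ (μ j)).natDegree :=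
            natDegree_mul_le
        _ ≤ (μ i - 1) + ∑ j ∈ Finset.univ.erase i, μ j := by gcongr
        _ ≤ ∑ j, μ j := by omega
    omega
  -- the coefficient sum reconstructs D
  have hS : (∑ k ∈ Finset.range ((∑ i, μ i) + 1),
      C (deriv (fun t => (P t).coeff k) 0) * X ^ k) = D := by
    simp only [key, C_mul_X_pow_eq_monomial]
    exact (Polynomial.as_sum_range' D _ hdeg).symm
  rw [hS]
  have hP0 : P 0 = ∏ i, (X - C (u i)) ^ μ i := by
    rw [hP]; simp [ha0]
  have dvd1 : (∏ i, (X - C (u i)) ^ (μ i - 1)) ∣ P 0 := by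
    rw [hP0]
    exact Finset.prod_dvd_prod_of_dvd _ _ fun i _ => pow_dvd_pow _ (Nat.sub_le _ _)
  have dvd2 : (∏ i, (X - C (u i)) ^ (μ i - 1)) ∣ D := by
    rw [hD]
    refine Finset.dvd_sum fun i _ => ?_
    have hsplit : (∏ j, (X - C (u j)) ^ (μ j - 1))
        = (X - C (u i)) ^ (μ i - 1) * ∏ j ∈ Finset.univ.erase i, (X - C (u j)) ^ (μ j - 1) :=
      (Finset.mul_prod_erase Finset.univ _ (Finset.mem_univ i)).symm
    rw [hsplit]
    refine mul_dvd_mul ?_ ?_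
    · exact ⟨C ((μ i : ℕ) : ℂ) * C (-(deriv (a i) 0)), by rw [hq]; ring⟩
    · exact Finset.prod_dvd_prod_of_dvd _ _ fun j _ => pow_dvd_pow _ (Nat.sub_le _ _)
  exact dvd_add dvd1 (by rw [Polynomial.smul_eq_C_mul]; exact dvd2.mul_left _)
end
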